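/- Let N be a nilpotent endomorphism of a finite-dimensional vector space V over a field of characteristic zero. Then there exists a unique increasing filtration W(N)_• of V, with W(N)_{-m-1} = 0 and W(N)_m = V for some m, such that N·W(N)_n ⊆ W(N)_{n-2} for all n, and for each k ≥ 0 the map induced by N^k from the graded quotient Gr^{W(N)}_k V to Gr^{W(N)}_{-k} V is an isomorphism. -/

import Mathlib

open Polynomial


/-- The defining properties of the weight filtration `W` of a nilpotent endomorphism `N`
of a finite-dimensional vector space `V`:
* `W` is an increasing filtration by subspaces, with `W (-(m+1)) = ⊥` and `W m = ⊤`
  for some `m`;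
* `N (W n) ⊆ W (n - 2)` for all `n`;
* for each `k ≥ 0`, the map induced by `N ^ k` from `Gr_k V = W k / W (k-1)` to
  `Gr_{-k} V = W (-k) / W (-k-1)` is an isomorphism (expressed elementarily: `N ^ k`
  maps `W k` into `W (-k)`, the induced map is surjective onto the graded quotient,
  and its kernel on the graded quotient is trivial). -/
def IsWeightFiltration {F V : Type*} [Field F] [AddCommGroup V] [Module F V]
    (N : V →ₗ[F] V) (W : ℤ → Submodule F V) : Prop :=
  Monotone W ∧
  (∃ m : ℤ, W (-(m + 1)) = ⊥ ∧ W m = ⊤) ∧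
  (∀ n : ℤ, ∀ x ∈ W n, N x ∈ W (n - 2)) ∧
  (∀ k : ℤ, 0 ≤ k →
    (∀ x ∈ W k, (N ^ k.toNat) x ∈ W (-k)) ∧
    (∀ y ∈ W (-k), ∃ x ∈ W k, (N ^ k.toNat) x - y ∈ W (-k - 1)) ∧
    (∀ x ∈ W k, (N ^ k.toNat) x ∈ W (-k - 1) → x ∈ W (k - 1)))


section Uniqueness

variable {F V : Type*} [Field F] [AddCommGroup V] [Module F V]
  {N : V →ₗ[F] V} {W W' : ℤ → Submodule F V}

lemma wf_iter (h : ∀ n : ℤ, ∀ x ∈ W n, N x ∈ W (n - 2)) :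
    ∀ (d : ℕ) (n : ℤ), ∀ x ∈ W n, (N ^ d) x ∈ W (n - 2 * d) := by
  intro d
  induction d with
  | zero => intro n x hx; simpa using hx
  | succ d ih =>
    intro n x hx
    have h2 := ih (n - 2) (N x) (h n x hx)
    have e : (N ^ (d + 1)) x = (N ^ d) (N x) := by
      rw [pow_succ, Module.End.mul_apply]
    rw [e]
    have e2 : n - 2 - 2 * (d : ℤ) = n - 2 * ((d : ℤ) + 1) := by ring
    rw [e2] at h2
    have e3 : n - 2 * (((d + 1 : ℕ)) : ℤ) = n - 2 * ((d : ℤ) + 1) := by push_cast; ring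
    rw [e3]
    exact h2

lemma wf_mem_iff (h : IsWeightFiltration N W) {k : ℤ} (hk : 0 ≤ k) (x : V) :
    x ∈ W k ↔ (N ^ (k + 1).toNat) x ∈ W (-k - 2) := by
  obtain ⟨hmono, ⟨m, hbot, htop⟩, hstep, hgr⟩ := h
  constructor
  · intro hx
    have h2 := wf_iter hstep (k + 1).toNat k x hx
    have e : k - 2 * (((k + 1).toNat : ℤ)) = -k - 2 := by omega
    rwa [e] at h2
  · have key : ∀ (d : ℕ) (x : V), x ∈ W (k + d) →
        (N ^ (k + 1).toNat) x ∈ W (-k - 2) → x ∈ W k := by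
      intro d
      induction d with
      | zero => intro x hx _; simpa using hx
      | succ d ih =>
        intro x hx hNx
        set n : ℤ := k + d + 1 with hn
        have hx' : x ∈ W n := by
          have e : k + ((d + 1 : ℕ) : ℤ) = n := by push_cast; ring
          rwa [e] at hx
        have h1 : (N ^ n.toNat) x ∈ W (-n - 1) := by
          have e1 : n.toNat = d + (k + 1).toNat := by omega
          rw [e1, pow_add, Module.End.mul_apply]
          have h2 := wf_iter hstep d (-k - 2) _ hNx
          exact hmono (by omega) h2
        have h3 := (hgr n (by omega)).2.2 x hx' h1
        have e2 : n - 1 = k + d := by omega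
        rw [e2] at h3
        exact ih x h3 hNx
    intro hNx
    have hx : x ∈ W (k + ((m - k).toNat : ℤ)) := by
      have hxm : x ∈ W m := by rw [htop]; trivial
      exact hmono (by omega) hxm
    exact key _ x hx hNx

lemma wf_neg_eq (h : IsWeightFiltration N W) {κ : ℤ} (hκ : 1 ≤ κ) :
    W (-κ) = Submodule.map (N ^ κ.toNat) (W κ) := by
  obtain ⟨hmono, ⟨m, hbot, htop⟩, hstep, hgr⟩ := h
  apply le_antisymm
  · have key : ∀ (c : ℕ) (κ : ℤ), 1 ≤ κ → m + 1 - κ ≤ c →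
        W (-κ) ≤ Submodule.map (N ^ κ.toNat) (W κ) := by
      intro c
      induction c with
      | zero =>
        intro κ h1 hc x hx
        have hb : x ∈ W (-(m + 1)) := hmono (by omega) hx
        rw [hbot, Submodule.mem_bot] at hb
        rw [hb]
        exact Submodule.zero_mem _
      | succ c ih =>
        intro κ h1 hc x hx
        obtain ⟨y, hy, hd⟩ := (hgr κ (by omega)).2.1 x hx
        have hd' : (N ^ κ.toNat) y - x ∈ W (-(κ + 1)) := by
          have e : -κ - 1 = -(κ + 1) := by ring
          rwa [e] at hd
        obtain ⟨z, hz, hz2⟩ := ih (κ + 1) (by omega) (by omega) hd'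
        refine ⟨y - N z, ?_, ?_⟩
        · refine (W κ).sub_mem hy (hmono (by omega) (hstep _ z hz))
        · have e1 : (κ + 1).toNat = κ.toNat + 1 := by omega
          rw [e1, pow_succ, Module.End.mul_apply] at hz2
          rw [map_sub]
          rw [hz2]
          abel
    exact key (m + 1 - κ).toNat κ hκ (by omega)
  · rintro x ⟨y, hy, rfl⟩
    have h2 := wf_iter hstep κ.toNat κ y hy
    have e : κ - 2 * ((κ.toNat : ℕ) : ℤ) = -κ := by omega
    rwa [e] at h2

lemma wf_unique (h : IsWeightFiltration N W) (h' : IsWeightFiltration N W') : W = W' := by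
  obtain ⟨m, hbot, htop⟩ := h.2.1
  obtain ⟨m', hbot', htop'⟩ := h'.2.1
  have hmono := h.1
  have hmono' := h'.1
  have top : ∀ k : ℤ, m ≤ k → W k = ⊤ := fun k hk => top_unique (htop ▸ hmono hk)
  have top' : ∀ k : ℤ, m' ≤ k → W' k = ⊤ := fun k hk => top_unique (htop' ▸ hmono' hk)
  have pos : ∀ (d : ℕ) (k : ℤ), 0 ≤ k → max m m' - k ≤ d → W k = W' k := by
    intro d
    induction d with
    | zero =>
      intro k hk hd
      rw [top k (by omega), top' k (by omega)]
    | succ d ih =>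
      intro k hk hd
      by_cases hkm : max m m' ≤ k
      · rw [top k (by omega), top' k (by omega)]
      · have e2 : W (k + 2) = W' (k + 2) := ih (k + 2) (by omega) (by omega)
        have neg2 : W (-(k + 2)) = W' (-(k + 2)) := by
          rw [wf_neg_eq h (by omega), wf_neg_eq h' (by omega), e2]
        ext x
        rw [wf_mem_iff h hk, wf_mem_iff h' hk]
        have e3 : -k - 2 = -(k + 2) := by ring
        rw [e3, neg2]
  have posAll : ∀ k : ℤ, 0 ≤ k → W k = W' k := fun k hk =>
    pos (max m m' - k).toNat k hk (by omega)
  funext n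
  rcases le_or_gt 0 n with hn | hn
  · exact posAll n hn
  · have e : n = -(-n) := by ring
    rw [e, wf_neg_eq h (by omega), wf_neg_eq h' (by omega), posAll (-n) (by omega)]

end Uniqueness

section Block

variable {R M : Type*} [CommRing R] [AddCommGroup M] [Module R M]

lemma range_pow_le (f : M →ₗ[R] M) {a b : ℕ} (hab : b ≤ a) :
    LinearMap.range (f ^ a) ≤ LinearMap.range (f ^ b) := by
  obtain ⟨c, rfl⟩ := Nat.exists_eq_add_of_le hab
  rintro x ⟨y, rfl⟩
  exact ⟨(f ^ c) y, by rw [pow_add, Module.End.mul_apply]⟩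

variable (F : Type*) [Field F] (e : ℕ)

abbrev Blk : Type _ := F[X] ⧸ (Submodule.span F[X] {(X : F[X]) ^ e})

noncomputable def Nb : Blk F e →ₗ[F] Blk F e := Algebra.lsmul F F (Blk F e) (X : F[X])

lemma Nb_pow_apply (n : ℕ) (x : Blk F e) : ((Nb F e) ^ n) x = ((X : F[X]) ^ n) • x := by
  have h : (Nb F e) ^ n = Algebra.lsmul F F (Blk F e) ((X : F[X]) ^ n) := by
    rw [Nb, ← map_pow]
  rw [h]; rfl

lemma Nb_pow_e : (Nb F e) ^ e = 0 := by
  apply LinearMap.ext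
  intro x
  obtain ⟨p, rfl⟩ := Submodule.Quotient.mk_surjective _ x
  rw [LinearMap.zero_apply, Nb_pow_apply, ← Submodule.Quotient.mk_smul,
    Submodule.Quotient.mk_eq_zero]
  rw [smul_eq_mul]
  exact Submodule.mem_span_singleton.mpr ⟨p, by rw [smul_eq_mul, mul_comm]⟩

lemma ker_Nb_pow_le (s : ℕ) :
    LinearMap.ker ((Nb F e) ^ s) ≤ LinearMap.range ((Nb F e) ^ (e - s)) := by
  rcases le_or_gt e s with hse | hse
  · have : e - s = 0 := by omega
    rw [this, pow_zero]
    intro x _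
    exact ⟨x, rfl⟩
  · intro x hx
    obtain ⟨p, rfl⟩ := Submodule.Quotient.mk_surjective _ x
    rw [LinearMap.mem_ker, Nb_pow_apply, ← Submodule.Quotient.mk_smul,
      Submodule.Quotient.mk_eq_zero, smul_eq_mul, Submodule.mem_span_singleton] at hx
    obtain ⟨c, hc⟩ := hx
    have hdvd : (X : F[X]) ^ (e - s) ∣ p := by
      have h1 : (X : F[X]) ^ s * (X : F[X]) ^ (e - s) ∣ (X : F[X]) ^ s * p := by
        rw [← pow_add]
        have : s + (e - s) = e := by omega
        rw [this]
        exact ⟨c, by rw [← hc, smul_eq_mul, mul_comm]⟩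
      exact (mul_dvd_mul_iff_left (pow_ne_zero s Polynomial.X_ne_zero)).mp h1
    obtain ⟨q, rfl⟩ := hdvd
    refine ⟨Submodule.Quotient.mk q, ?_⟩
    rw [Nb_pow_apply, ← Submodule.Quotient.mk_smul, smul_eq_mul]

def tB (n : ℤ) : ℕ := ((e : ℤ) - n).toNat / 2

noncomputable def Wb (n : ℤ) : Submodule F (Blk F e) := LinearMap.range ((Nb F e) ^ tB e n)

lemma Wb_mono : Monotone (Wb F e) := by
  intro a b hab
  exact range_pow_le _ (by unfold tB; omega)

lemma Wb_top {n : ℤ} (hn : (e : ℤ) ≤ n) : Wb F e n = ⊤ := by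
  have ht : tB e n = 0 := by unfold tB; omega
  rw [Wb, ht, pow_zero]
  exact LinearMap.range_eq_top.mpr fun x => ⟨x, rfl⟩

lemma Wb_bot {n : ℤ} (hn : n ≤ -(e : ℤ) - 1) : Wb F e n = ⊥ := by
  have ht : e ≤ tB e n := by unfold tB; omega
  refine le_bot_iff.mp ?_
  refine le_trans (range_pow_le _ ht) ?_
  rw [Nb_pow_e, LinearMap.range_zero]

lemma Wb_step (n : ℤ) : ∀ x ∈ Wb F e n, Nb F e x ∈ Wb F e (n - 2) := by
  rintro x ⟨y, rfl⟩
  have h : Nb F e (((Nb F e) ^ tB e n) y) = ((Nb F e) ^ (tB e n + 1)) y := by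
    rw [pow_succ', Module.End.mul_apply]
  rw [h]
  exact range_pow_le _ (by unfold tB; omega) ⟨y, rfl⟩

lemma Wb_k1 {k : ℤ} (hk : 0 ≤ k) : ∀ x ∈ Wb F e k, ((Nb F e) ^ k.toNat) x ∈ Wb F e (-k) := by
  rintro x ⟨y, rfl⟩
  have h : ((Nb F e) ^ k.toNat) (((Nb F e) ^ tB e k) y) = ((Nb F e) ^ (k.toNat + tB e k)) y := by
    rw [pow_add, Module.End.mul_apply]
  rw [h]
  exact range_pow_le _ (by unfold tB; omega) ⟨y, rfl⟩

lemma Wb_surj {k : ℤ} (hk : 0 ≤ k) :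
    ∀ y ∈ Wb F e (-k), ∃ x ∈ Wb F e k, ((Nb F e) ^ k.toNat) x - y ∈ Wb F e (-k - 1) := by
  intro y hy
  rcases le_or_gt k.toNat e with hke | hke
  · have ht : tB e (-k) = k.toNat + tB e k := by unfold tB; omega
    rw [Wb, ht] at hy
    obtain ⟨z, rfl⟩ := hy
    refine ⟨((Nb F e) ^ tB e k) z, ⟨z, rfl⟩, ?_⟩
    rw [← Module.End.mul_apply, ← pow_add, sub_self]
    exact Submodule.zero_mem _
  · have hbot : Wb F e (-k) = ⊥ := by
      refine le_bot_iff.mp (le_trans (range_pow_le _ (show e ≤ tB e (-k) by unfold tB; omega)) ?_)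
      rw [Nb_pow_e, LinearMap.range_zero]
    rw [hbot, Submodule.mem_bot] at hy
    refine ⟨0, Submodule.zero_mem _, ?_⟩
    rw [hy, map_zero, sub_zero]
    exact Submodule.zero_mem _

lemma Wb_inj {k : ℤ} (hk : 0 ≤ k) :
    ∀ x ∈ Wb F e k, ((Nb F e) ^ k.toNat) x ∈ Wb F e (-k - 1) → x ∈ Wb F e (k - 1) := by
  intro x hx hNx
  by_cases heq : tB e (k - 1) = tB e k
  · rw [Wb, heq]; exact hx
  · -- then K ≤ e and e - K odd
    set K := k.toNat with hK
    have hke : K ≤ e := by by_contra hc; exact heq (by unfold tB; omega)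
    have hodd : (e - K) % 2 = 1 := by
      by_contra hc
      exact heq (by unfold tB; omega)
    set b := tB e k with hb
    have hbv : e - K = 2 * b + 1 := by unfold tB at hb; omega
    have ht1 : tB e (k - 1) = b + 1 := by unfold tB; omega
    have ht2 : tB e (-k - 1) = K + b + 1 := by unfold tB; omega
    obtain ⟨w, rfl⟩ := hx
    rw [← Module.End.mul_apply, ← pow_add] at hNx
    rw [Wb, ht2] at hNx
    obtain ⟨u, hu⟩ := hNx
    rw [← hb] at hu
    have hker : w - Nb F e u ∈ LinearMap.ker ((Nb F e) ^ (K + b)) := by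
      rw [LinearMap.mem_ker, map_sub, ← hu]
      rw [show K + b + 1 = (K + b) + 1 from rfl, pow_succ, Module.End.mul_apply]
      exact sub_self _
    have hrange := ker_Nb_pow_le F e (K + b) hker
    have he : e - (K + b) = b + 1 := by omega
    rw [he] at hrange
    obtain ⟨z, hz⟩ := hrange
    have hw : w = Nb F e u + ((Nb F e) ^ (b + 1)) z := by
      rw [hz]; abel
    rw [Wb, ht1]
    rw [← hb, hw, map_add]
    refine Submodule.add_mem _ ?_ ?_
    · exact ⟨u, by rw [pow_succ, Module.End.mul_apply]⟩
    · rw [← Module.End.mul_apply, ← pow_add]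
      exact range_pow_le _ (by omega) ⟨z, rfl⟩

end Block
section Transfer

variable {F V V' : Type*} [Field F] [AddCommGroup V] [Module F V]
  [AddCommGroup V'] [Module F V']

lemma conj_pow_apply {N : V →ₗ[F] V} {N' : V' →ₗ[F] V'} (σ : V ≃ₗ[F] V')
    (hσ : ∀ x, σ (N x) = N' (σ x)) (j : ℕ) (x : V) :
    σ ((N ^ j) x) = (N' ^ j) (σ x) := by
  induction j generalizing x with
  | zero => simp
  | succ j ih =>
    rw [pow_succ, pow_succ, Module.End.mul_apply, Module.End.mul_apply, ih (N x), hσ]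

lemma wf_comap {N : V →ₗ[F] V} {N' : V' →ₗ[F] V'} (σ : V ≃ₗ[F] V')
    (hσ : ∀ x, σ (N x) = N' (σ x)) {W' : ℤ → Submodule F V'}
    (h : IsWeightFiltration N' W') :
    IsWeightFiltration N (fun n => (W' n).comap (σ : V →ₗ[F] V')) := by
  obtain ⟨hmono, ⟨m, hbot, htop⟩, hstep, hgr⟩ := h
  refine ⟨fun a b hab => Submodule.comap_mono (hmono hab), ⟨m, ?_, ?_⟩, ?_, ?_⟩
  · show Submodule.comap (σ : V →ₗ[F] V') (W' (-(m + 1))) = ⊥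
    rw [hbot, Submodule.comap_bot]
    exact σ.ker
  · show Submodule.comap (σ : V →ₗ[F] V') (W' m) = ⊤
    rw [htop, Submodule.comap_top]
  · intro n x hx
    show σ (N x) ∈ W' (n - 2)
    rw [hσ]
    exact hstep n (σ x) hx
  · intro k hk
    obtain ⟨g1, g2, g3⟩ := hgr k hk
    refine ⟨?_, ?_, ?_⟩
    · intro x hx
      show σ ((N ^ k.toNat) x) ∈ W' (-k)
      rw [conj_pow_apply σ hσ]
      exact g1 (σ x) hx
    · intro y hy
      obtain ⟨x', hx', hd⟩ := g2 (σ y) hy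
      refine ⟨σ.symm x', ?_, ?_⟩
      · rw [Submodule.mem_comap]
        simpa using hx'
      · show σ ((N ^ k.toNat) (σ.symm x') - y) ∈ W' (-k - 1)
        rw [map_sub, conj_pow_apply σ hσ]
        simpa using hd
    · intro x hx hx2
      have hx2' : (N' ^ k.toNat) (σ x) ∈ W' (-k - 1) := by
        rw [← conj_pow_apply σ hσ]
        exact hx2
      exact g3 (σ x) hx hx2'

end Transfer

section PiAssemble

variable (F : Type*) [Field F] {ι : Type*} [Fintype ι] (e : ι → ℕ)

noncomputable def NP : (∀ i, Blk F (e i)) →ₗ[F] (∀ i, Blk F (e i)) :=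
  Algebra.lsmul F F (∀ i, Blk F (e i)) (X : F[X])

lemma NP_pow_apply (n : ℕ) (x : ∀ i, Blk F (e i)) (i : ι) :
    (((NP F e) ^ n) x) i = ((Nb F (e i)) ^ n) (x i) := by
  have h : (NP F e) ^ n = Algebra.lsmul F F (∀ i, Blk F (e i)) ((X : F[X]) ^ n) := by
    rw [NP, ← map_pow]
  rw [h, Nb_pow_apply]
  rfl

noncomputable def WP (n : ℤ) : Submodule F (∀ i, Blk F (e i)) :=
  Submodule.pi Set.univ (fun i => Wb F (e i) n)

lemma mem_WP {n : ℤ} {x : ∀ i, Blk F (e i)} : x ∈ WP F e n ↔ ∀ i, x i ∈ Wb F (e i) n := by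
  simp [WP, Submodule.mem_pi]

lemma wf_WP : IsWeightFiltration (NP F e) (WP F e) := by
  refine ⟨?_, ?_, ?_, ?_⟩
  · intro a b hab x hx
    rw [mem_WP] at hx ⊢
    exact fun i => Wb_mono F (e i) hab (hx i)
  · refine ⟨(Finset.univ.sup e : ℕ), ?_, ?_⟩
    · rw [eq_bot_iff]
      intro x hx
      rw [mem_WP] at hx
      rw [Submodule.mem_bot]
      funext i
      have hei : e i ≤ Finset.univ.sup e := Finset.le_sup (Finset.mem_univ i)
      have := hx i
      rw [Wb_bot F (e i) (by push_cast; omega)] at this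
      simpa using this
    · rw [eq_top_iff]
      intro x _
      rw [mem_WP]
      intro i
      have hei : e i ≤ Finset.univ.sup e := Finset.le_sup (Finset.mem_univ i)
      rw [Wb_top F (e i) (by push_cast; omega)]
      trivial
  · intro n x hx
    rw [mem_WP] at hx ⊢
    intro i
    have h1 : (NP F e x) i = Nb F (e i) (x i) := by
      have := NP_pow_apply F e 1 x i
      simpa [pow_one] using this
    rw [h1]
    exact Wb_step F (e i) n (x i) (hx i)
  · intro k hk
    refine ⟨?_, ?_, ?_⟩
    · intro x hx
      rw [mem_WP] at hx ⊢
      intro i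
      rw [NP_pow_apply]
      exact Wb_k1 F (e i) hk (x i) (hx i)
    · intro y hy
      rw [mem_WP] at hy
      have hchoice : ∀ i, ∃ xi ∈ Wb F (e i) k,
          ((Nb F (e i)) ^ k.toNat) xi - y i ∈ Wb F (e i) (-k - 1) :=
        fun i => Wb_surj F (e i) hk (y i) (hy i)
      choose x hx1 hx2 using hchoice
      refine ⟨x, (mem_WP F e).mpr hx1, ?_⟩
      rw [mem_WP]
      intro i
      have : (((NP F e) ^ k.toNat) x - y) i = ((Nb F (e i)) ^ k.toNat) (x i) - y i := by
        rw [Pi.sub_apply, NP_pow_apply]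
      rw [this]
      exact hx2 i
    · intro x hx hx2
      rw [mem_WP] at hx hx2 ⊢
      intro i
      refine Wb_inj F (e i) hk (x i) (hx i) ?_
      have := hx2 i
      rwa [NP_pow_apply] at this

end PiAssemble
section Existence

universe u v

lemma wf_exists_aux {F : Type u} {V : Type (max u v)} [Field F] [AddCommGroup V] [Module F V]
    [FiniteDimensional F V] (N : V →ₗ[F] V) (hN : ∃ r : ℕ, N ^ r = 0) :
    ∃ W : ℤ → Submodule F V, IsWeightFiltration N W := by
  classical
  obtain ⟨r, hr⟩ := hN
  haveI : Module.Finite F (Module.AEval' N) := Module.Finite.equiv (Module.AEval'.of N)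
  haveI : Module.Finite F[X] (Module.AEval' N) :=
    Module.Finite.of_restrictScalars_finite F F[X] _
  have hsm : ∀ (j : ℕ) (y : V),
      ((X : F[X]) ^ j) • (Module.AEval'.of N y) = Module.AEval'.of N ((N ^ j) y) := by
    intro j
    induction j with
    | zero => intro y; simp
    | succ j ih =>
      intro y
      rw [pow_succ', mul_smul, ih, Module.AEval'.X_smul_of]
      congr 1
      rw [pow_succ', Module.End.mul_apply]
  have hz : ∀ a : Module.AEval' N, ((X : F[X]) ^ r) • a = 0 := by
    intro a
    rw [show a = Module.AEval'.of N ((Module.AEval'.of N).symm a) by simp, hsm, hr]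
    simp
  have htor : Module.IsTorsion F[X] (Module.AEval' N) := fun a =>
    ⟨⟨(X : F[X]) ^ r, mem_nonZeroDivisors_of_ne_zero (pow_ne_zero _ Polynomial.X_ne_zero)⟩,
      hz a⟩
  obtain ⟨ι, hfin, p, hirr, ee, ⟨σ⟩⟩ := Module.equiv_directSum_of_isTorsion.{u, max u v} htor
  haveI := hfin
  have hspan : ∀ i, (Submodule.span F[X] {p i ^ ee i}) =
      Submodule.span F[X] {(X : F[X]) ^ ee i} := by
    intro i
    rcases Nat.eq_zero_or_pos (ee i) with h0 | hpos
    · rw [h0, pow_zero, pow_zero]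
    · have hann := hz (σ.symm (DirectSum.lof F[X] ι
        (fun i => F[X] ⧸ Submodule.span F[X] {p i ^ ee i}) i (Submodule.Quotient.mk 1)))
      have h2 : ((X : F[X]) ^ r) • (DirectSum.lof F[X] ι
          (fun i => F[X] ⧸ Submodule.span F[X] {p i ^ ee i}) i (Submodule.Quotient.mk 1)) = 0 := by
        have h2' := congrArg σ hann
        rwa [map_smul, σ.apply_symm_apply, map_zero] at h2'
      have h3 : ((X : F[X]) ^ r) • (Submodule.Quotient.mk (1 : F[X]) :
          F[X] ⧸ Submodule.span F[X] {p i ^ ee i}) = 0 := by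
        have h3' := congrArg (fun z => z i) h2
        simp only [DirectSum.smul_apply, DirectSum.lof_apply, DirectSum.zero_apply] at h3'
        exact h3'
      rw [← Submodule.Quotient.mk_smul, Submodule.Quotient.mk_eq_zero, smul_eq_mul, mul_one,
        Submodule.mem_span_singleton] at h3
      obtain ⟨c, hc⟩ := h3
      have hdvd : p i ∣ (X : F[X]) ^ r :=
        dvd_trans (dvd_pow_self (p i) (Nat.pos_iff_ne_zero.mp hpos)) ⟨c, by rw [← hc, smul_eq_mul, mul_comm]⟩
      have hprime : Prime (p i) := UniqueFactorizationMonoid.irreducible_iff_prime.mp (hirr i)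
      have hdvdX : p i ∣ (X : F[X]) := hprime.dvd_of_dvd_pow hdvd
      have hassoc : Associated (p i) (X : F[X]) :=
        (hirr i).associated_of_dvd Polynomial.irreducible_X hdvdX
      have := Ideal.span_singleton_eq_span_singleton.mpr (hassoc.pow_pow (n := ee i))
      exact this
  let τ₁ : (DirectSum ι (fun i => F[X] ⧸ Submodule.span F[X] {p i ^ ee i})) ≃ₗ[F[X]] (DirectSum ι (fun i => Blk F (ee i))) :=
    DFinsupp.mapRange.linearEquiv (fun i => Submodule.quotEquivOfEq _ _ (hspan i))
  let τ₂ : (DirectSum ι (fun i => Blk F (ee i))) ≃ₗ[F[X]] (∀ i, Blk F (ee i)) :=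
    DirectSum.linearEquivFunOnFintype F[X] ι (fun i => Blk F (ee i))
  let τ : Module.AEval' N ≃ₗ[F[X]] (∀ i, Blk F (ee i)) := σ ≪≫ₗ τ₁ ≪≫ₗ τ₂
  let φ : V ≃ₗ[F] (∀ i, Blk F (ee i)) := (Module.AEval'.of N).trans (τ.restrictScalars F)
  have hφ : ∀ x, φ (N x) = NP F ee (φ x) := by
    intro x
    show τ (Module.AEval'.of N (N x)) = NP F ee (τ (Module.AEval'.of N x))
    rw [← Module.AEval'.X_smul_of, map_smul]
    rfl
  exact ⟨_, wf_comap φ hφ (wf_WP F ee)⟩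

lemma wf_exists {F : Type u} {V : Type v} [Field F] [AddCommGroup V] [Module F V]
    [FiniteDimensional F V] (N : V →ₗ[F] V) (hN : ∃ r : ℕ, N ^ r = 0) :
    ∃ W : ℤ → Submodule F V, IsWeightFiltration N W := by
  obtain ⟨r, hr⟩ := hN
  let σ₀ : V ≃ₗ[F] ULift.{u} V := ULift.moduleEquiv.symm
  let N₁ : ULift.{u} V →ₗ[F] ULift.{u} V := σ₀.toLinearMap ∘ₗ N ∘ₗ σ₀.symm.toLinearMap
  have hσ₀ : ∀ x, σ₀ (N x) = N₁ (σ₀ x) := by intro x; simp [N₁]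
  haveI : FiniteDimensional F (ULift.{u} V) := Module.Finite.equiv σ₀
  have hN₁ : ∃ r : ℕ, N₁ ^ r = 0 := by
    refine ⟨r, ?_⟩
    apply LinearMap.ext
    intro y
    have h1 := conj_pow_apply σ₀ hσ₀ r (σ₀.symm y)
    rw [σ₀.apply_symm_apply] at h1
    rw [LinearMap.zero_apply, ← h1, hr]
    simp
  obtain ⟨W₁, hW₁⟩ := wf_exists_aux.{u, v} N₁ hN₁
  exact ⟨_, wf_comap σ₀ hσ₀ hW₁⟩

end Existence


/-- **Existence and uniqueness of the weight filtration of a nilpotent endomorphism.**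
If `N` is a nilpotent endomorphism of a finite-dimensional vector space `V` over a field
of characteristic zero, then there is a unique increasing filtration `W(N)_•` of `V`,
bounded below by `⊥` and above by `⊤`, such that `N · W(N)_n ⊆ W(N)_{n-2}` for all `n`
and for each `k ≥ 0` the map induced by `N^k` from `Gr_k V` to `Gr_{-k} V` is an
isomorphism. -/
theorem weight_filtration_exists_unique
    {F V : Type*} [Field F] [CharZero F] [AddCommGroup V] [Module F V]
    [FiniteDimensional F V] (N : V →ₗ[F] V) (hN : ∃ r : ℕ, N ^ r = 0) :
    ∃! W : ℤ → Submodule F V, IsWeightFiltration N W := by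
  obtain ⟨W, hW⟩ := wf_exists N hN
  exact ⟨W, hW, fun W' hW' => wf_unique hW' hW⟩
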